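/- For every integer L ≥ 1, every K ∈ {1,…,L} and every s ∈ ℝ^L, top_{K,ε}(s) converges to top_K(s) as ε → 0⁺. -/

import Mathlib

open MeasureTheory ProbabilityTheory

/-- The list of coordinates of `s : ℝ^L` sorted in decreasing order. -/
noncomputable def descSort {L : ℕ} (s : Fin L → ℝ) : List ℝ :=
  (Multiset.sort (Multiset.map s Finset.univ.val) (· ≤ ·)).reverse

/-- `kthLargest K s` is the `K`-th largest coordinate of `s` (1-indexed), i.e. `s_(K)`. -/
noncomputable def kthLargest {L : ℕ} (K : ℕ) (s : Fin L → ℝ) : ℝ :=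
  (descSort s).getD (K - 1) 0

/-- `topsum K s` is the sum of the `K` largest coordinates of `s`,
with the convention `topsum 0 s = 0`. -/
noncomputable def topsum {L : ℕ} (K : ℕ) (s : Fin L → ℝ) : ℝ :=
  ((descSort s).take K).sum

/-- The standard Gaussian measure `N(0, Id_L)` on `ℝ^L`:
the coordinates are i.i.d. standard normal random variables. -/
noncomputable def stdGaussian (L : ℕ) : Measure (EuclideanSpace ℝ (Fin L)) :=
  (Measure.pi (fun _ : Fin L => gaussianReal 0 1)).map (WithLp.toLp 2)

/-- The smoothed top-sum `topsumSm K ε s = E[topsum K (s + ε Z)]`, `Z ∼ N(0, Id_L)`. -/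
noncomputable def topsumSm {L : ℕ} (K : ℕ) (ε : ℝ) (s : EuclideanSpace ℝ (Fin L)) : ℝ :=
  ∫ z, topsum K (s + ε • z) ∂(stdGaussian L)

/-- The smoothed top-K operator `topSm K ε s = topsumSm K ε s - topsumSm (K-1) ε s`. -/
noncomputable def topSm {L : ℕ} (K : ℕ) (ε : ℝ) (s : EuclideanSpace ℝ (Fin L)) : ℝ :=
  topsumSm K ε s - topsumSm (K - 1) ε s

/-- The 0/1 vector whose entries equal 1 exactly at the `K` coordinates carrying the
`K` largest values of `v` (well defined when the `K`-th and `(K+1)`-th largest values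
of `v` are distinct). -/
noncomputable def argtops {L : ℕ} (K : ℕ) (v : Fin L → ℝ) : Fin L → ℝ :=
  fun i => if kthLargest K v ≤ v i then 1 else 0

/-! ### Auxiliary lemmas about `descSort`, `kthLargest` and `topsum` -/

lemma descSort_length {L : ℕ} (v : Fin L → ℝ) : (descSort v).length = L := by
  simp [descSort]

lemma descSort_anti {L : ℕ} (v : Fin L → ℝ) {i j : ℕ} (hj : j < (descSort v).length)
    (hij : i ≤ j) : (descSort v)[j]'hj ≤ (descSort v)[i]'(lt_of_le_of_lt hij hj) := by
  rcases eq_or_lt_of_le hij with rfl | hij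
  · exact le_refl _
  · have hs : (descSort v).Pairwise (· ≥ ·) := by
      rw [descSort, List.pairwise_reverse]
      exact Multiset.pairwise_sort ..
    exact List.pairwise_iff_getElem.1 hs i j _ _ hij

lemma descSort_count {L : ℕ} (v : Fin L → ℝ) (t : ℝ) :
    ((descSort v).filter (fun x => t ≤ x)).length
      = (Finset.univ.filter (fun i => t ≤ v i)).card := by
  rw [descSort, List.filter_reverse, List.length_reverse]
  have h1 : Multiset.filter (fun x => t ≤ x)
      ((Multiset.sort (Multiset.map v Finset.univ.val) (· ≤ ·) : List ℝ) : Multiset ℝ)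
      = ((Multiset.sort (Multiset.map v Finset.univ.val) (· ≤ ·)).filter
          (fun x => t ≤ x) : List ℝ) := Multiset.filter_coe _ _
  rw [Multiset.sort_eq] at h1
  have h2 := congrArg Multiset.card h1
  simp only [Multiset.coe_card] at h2
  rw [← h2, ← Multiset.countP_eq_card_filter, Multiset.countP_map, Finset.card_filter]
  simp [Multiset.countP_eq_card_filter, Finset.filter]

lemma le_kthLargest_iff {L K : ℕ} (hK1 : 1 ≤ K) (hKL : K ≤ L) (v : Fin L → ℝ) (t : ℝ) :
    t ≤ kthLargest K v ↔ K ≤ (Finset.univ.filter (fun i => t ≤ v i)).card := by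
  set l := descSort v with hl
  have hlen : l.length = L := descSort_length v
  have hk : K - 1 < l.length := by omega
  have hgetD : kthLargest K v = l[K - 1]'hk := List.getD_eq_getElem l 0 hk
  rw [← descSort_count v t, hgetD, ← hl]
  constructor
  · intro ht
    have htake : (l.take K).filter (fun x => t ≤ x) = l.take K := by
      rw [List.filter_eq_self]
      intro x hx
      rw [List.mem_iff_getElem] at hx
      obtain ⟨i, hi, rfl⟩ := hx
      have hiK : i < K := by
        have := hi; rw [List.length_take] at this; omega
      have hilen : i < l.length := by
        have := hi; rw [List.length_take] at this; omega
      rw [List.getElem_take]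
      have : l[K-1]'hk ≤ l[i]'hilen := descSort_anti v hk (by omega)
      exact decide_eq_true (le_trans ht this)
    have hsub : List.Sublist ((l.take K).filter (fun x => t ≤ x)) (l.filter (fun x => t ≤ x)) :=
      (List.take_sublist K l).filter _
    have := hsub.length_le
    rw [htake, List.length_take] at this
    omega
  · intro hcard
    by_contra ht
    push_neg at ht
    have hfd : (l.drop (K-1)).filter (fun x => t ≤ x) = [] := by
      rw [List.filter_eq_nil_iff]
      intro x hx
      rw [List.mem_iff_getElem] at hx
      obtain ⟨i, hi, rfl⟩ := hx
      rw [List.getElem_drop]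
      have hlen' : K - 1 + i < l.length := by
        have := hi; rw [List.length_drop] at this; omega
      have : l[K-1+i]'hlen' ≤ l[K-1]'hk := descSort_anti v hlen' (by omega)
      simp only [decide_eq_true_eq]
      exact fun h => absurd (le_trans h this) (not_le.2 ht)
    have hsplit : l.filter (fun x => t ≤ x)
        = (l.take (K-1)).filter (fun x => t ≤ x) ++ (l.drop (K-1)).filter (fun x => t ≤ x) := by
      rw [← List.filter_append, List.take_append_drop]
    have : (l.filter (fun x => t ≤ x)).length ≤ K - 1 := by
      rw [hsplit, List.length_append, hfd]
      simp only [List.length_nil, add_zero]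
      calc ((l.take (K-1)).filter (fun x => t ≤ x)).length ≤ (l.take (K-1)).length :=
            List.length_filter_le _ _
        _ ≤ K - 1 := by rw [List.length_take]; omega
    omega

lemma kthLargest_mono {L K : ℕ} (hK1 : 1 ≤ K) (hKL : K ≤ L) {u v : Fin L → ℝ}
    (h : ∀ i, u i ≤ v i) : kthLargest K u ≤ kthLargest K v := by
  rw [le_kthLargest_iff hK1 hKL]
  have h1 : K ≤ (Finset.univ.filter (fun i => kthLargest K u ≤ u i)).card :=
    (le_kthLargest_iff hK1 hKL u _).1 le_rfl
  refine le_trans h1 (Finset.card_le_card ?_)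
  intro i hi
  simp only [Finset.mem_filter] at hi ⊢
  exact ⟨hi.1, le_trans hi.2 (h i)⟩

lemma kthLargest_add_const {L K : ℕ} (hK1 : 1 ≤ K) (hKL : K ≤ L) (v : Fin L → ℝ) (c : ℝ) :
    kthLargest K (fun i => v i + c) = kthLargest K v + c := by
  have hmap : descSort (fun i => v i + c) = (descSort v).map (fun x => x + c) := by
    unfold descSort
    rw [List.map_reverse]
    congr 1
    have : Multiset.map (fun i => v i + c) Finset.univ.val
        = Multiset.map (fun x => x + c) (Multiset.map v Finset.univ.val) := by
      rw [Multiset.map_map]; rfl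
    rw [this, ← Multiset.map_sort (r := (· ≤ ·)) (r' := (· ≤ ·))]
    intro a _ b _
    exact (add_le_add_iff_right c).symm
  have hk : K - 1 < (descSort v).length := by rw [descSort_length]; omega
  have hk' : K - 1 < (descSort (fun i => v i + c)).length := by rw [descSort_length]; omega
  unfold kthLargest
  rw [List.getD_eq_getElem _ 0 hk, List.getD_eq_getElem _ 0 hk']
  simp only [hmap, List.getElem_map]

lemma abs_kthLargest_sub_le {L K : ℕ} (hK1 : 1 ≤ K) (hKL : K ≤ L) (u v : Fin L → ℝ)
    {c : ℝ} (hc : ∀ i, |u i - v i| ≤ c) : |kthLargest K u - kthLargest K v| ≤ c := by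
  have h1 : ∀ i, u i ≤ v i + c := fun i => by
    have := (abs_le.1 (hc i)).2; linarith
  have h2 : ∀ i, v i ≤ u i + c := fun i => by
    have := (abs_le.1 (hc i)).1; linarith
  have t1 : kthLargest K u ≤ kthLargest K v + c := by
    rw [← kthLargest_add_const hK1 hKL v c]
    exact kthLargest_mono hK1 hKL h1
  have t2 : kthLargest K v ≤ kthLargest K u + c := by
    rw [← kthLargest_add_const hK1 hKL u c]
    exact kthLargest_mono hK1 hKL h2
  rw [abs_le]; constructor <;> linarith

lemma topsum_succ {L : ℕ} {j : ℕ} (hj : j < L) (v : Fin L → ℝ) :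
    topsum (j + 1) v = topsum j v + kthLargest (j + 1) v := by
  have hlen : j < (descSort v).length := by rw [descSort_length]; omega
  unfold topsum kthLargest
  rw [List.sum_take_succ _ _ hlen]
  simp only [Nat.add_sub_cancel]
  rw [List.getD_eq_getElem _ 0 hlen]

lemma topsum_sub {L K : ℕ} (hK1 : 1 ≤ K) (hKL : K ≤ L) (v : Fin L → ℝ) :
    topsum K v - topsum (K - 1) v = kthLargest K v := by
  obtain ⟨j, rfl⟩ : ∃ j, K = j + 1 := ⟨K - 1, by omega⟩
  rw [topsum_succ (by omega) v]
  simp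

lemma topsum_eq_sum {L : ℕ} {j : ℕ} (hj : j ≤ L) (v : Fin L → ℝ) :
    topsum j v = ∑ k ∈ Finset.range j, kthLargest (k + 1) v := by
  induction j with
  | zero => simp [topsum]
  | succ n ih =>
      rw [topsum_succ (by omega) v, ih (by omega), Finset.sum_range_succ]

/-! ### Auxiliary measure-theoretic lemmas -/

lemma integrable_id_gaussianReal : Integrable (fun x : ℝ => x) (gaussianReal 0 1) := by
  rw [gaussianReal_of_var_ne_zero 0 one_ne_zero]
  rw [integrable_withDensity_iff (measurable_gaussianPDF 0 1)
    (Filter.Eventually.of_forall fun x => ENNReal.ofReal_lt_top)]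
  have h : Integrable (fun x : ℝ => (√(2 * Real.pi))⁻¹ * (x * Real.exp (-(1/2) * x ^ 2)))
      volume := (integrable_mul_exp_neg_mul_sq (by norm_num)).const_mul _
  refine h.congr (Filter.Eventually.of_forall fun x => ?_)
  simp only [gaussianPDF_def]
  rw [ENNReal.toReal_ofReal (gaussianPDFReal_nonneg 0 1 x)]
  simp only [gaussianPDFReal]
  push_cast
  rw [mul_one, sub_zero]
  ring_nf

instance stdGaussian_prob (L : ℕ) : IsProbabilityMeasure (stdGaussian L) :=
  Measure.isProbabilityMeasure_map (WithLp.measurable_toLp 2 _).aemeasurable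

lemma stdGaussian_map_eval (L : ℕ) (i : Fin L) :
    (stdGaussian L).map (fun z => z i) = gaussianReal 0 1 := by
  have hmeas : Measurable (fun z : EuclideanSpace ℝ (Fin L) => z i) :=
    (measurable_pi_apply i).comp (WithLp.measurable_ofLp 2 _)
  ext s hs
  rw [Measure.map_apply hmeas hs]
  have : (fun z : EuclideanSpace ℝ (Fin L) => z i) ⁻¹' s
      = WithLp.ofLp ⁻¹' Set.pi Set.univ (Function.update (fun _ : Fin L => (Set.univ : Set ℝ)) i s) := by
    rw [← Set.eval_preimage]
    rfl
  rw [this, _root_.stdGaussian, ← MeasurableEquiv.coe_toLp, MeasurableEquiv.map_apply]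
  change (Measure.pi fun _ : Fin L => gaussianReal 0 1)
    (Set.pi Set.univ (Function.update (fun _ : Fin L => (Set.univ : Set ℝ)) i s)) = _
  erw [Measure.pi_pi]
  rw [Finset.prod_eq_single i (fun j _ hj => by simp [Function.update_of_ne hj])
    (fun h => absurd (Finset.mem_univ i) h)]
  simp

lemma integrable_eval (L : ℕ) (i : Fin L) :
    Integrable (fun z : EuclideanSpace ℝ (Fin L) => z i) (stdGaussian L) := by
  have h := integrable_id_gaussianReal
  rw [← stdGaussian_map_eval L i] at h
  exact (integrable_map_measure h.aestronglyMeasurable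
    ((measurable_pi_apply i).comp (WithLp.measurable_ofLp 2 _)).aemeasurable).1 h

lemma integrable_norm_stdGaussian (L : ℕ) :
    Integrable (fun z : EuclideanSpace ℝ (Fin L) => ‖z‖) (stdGaussian L) := by
  have hsum : Integrable (fun z : EuclideanSpace ℝ (Fin L) => ∑ i : Fin L, |z i|)
      (stdGaussian L) :=
    integrable_finset_sum _ (fun i _ => (integrable_eval L i).abs)
  refine hsum.mono' (continuous_norm.aestronglyMeasurable) ?_
  refine Filter.Eventually.of_forall fun z => ?_
  rw [norm_norm]
  rw [EuclideanSpace.norm_eq]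
  have h1 : ∑ i : Fin L, ‖z i‖ ^ 2 ≤ (∑ i : Fin L, |z i|) ^ 2 := by
    simpa [Real.norm_eq_abs, sq_abs] using
      Finset.sum_sq_le_sq_sum_of_nonneg (f := fun i => |z i|)
        (fun i _ => abs_nonneg (z i))
  calc √(∑ i : Fin L, ‖z i‖ ^ 2) ≤ √((∑ i : Fin L, |z i|) ^ 2) := Real.sqrt_le_sqrt h1
    _ = ∑ i : Fin L, |z i| := Real.sqrt_sq (Finset.sum_nonneg fun i _ => abs_nonneg _)

lemma abs_apply_le_norm {L : ℕ} (x : EuclideanSpace ℝ (Fin L)) (i : Fin L) : |x i| ≤ ‖x‖ := by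
  rw [EuclideanSpace.norm_eq, ← Real.sqrt_sq_eq_abs]
  apply Real.sqrt_le_sqrt
  have := Finset.single_le_sum (f := fun j => ‖x j‖ ^ 2) (fun j _ => sq_nonneg _)
    (Finset.mem_univ i)
  simpa [Real.norm_eq_abs, sq_abs] using this

lemma coord_diff_bound {L : ℕ} (s z : EuclideanSpace ℝ (Fin L)) (ε : ℝ) (i : Fin L) :
    |(s + ε • z) i - s i| ≤ |ε| * ‖z‖ := by
  have h : (s + ε • z) i - s i = ε * z i := by
    simp [PiLp.add_apply, PiLp.smul_apply, smul_eq_mul]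
  rw [h, abs_mul]
  exact mul_le_mul_of_nonneg_left (abs_apply_le_norm z i) (abs_nonneg ε)

lemma continuous_kthLargest {L K : ℕ} (hK1 : 1 ≤ K) (hKL : K ≤ L) :
    Continuous (fun v : EuclideanSpace ℝ (Fin L) => kthLargest K v) := by
  refine LipschitzWith.continuous (K := 1) (LipschitzWith.of_dist_le_mul fun u w => ?_)
  rw [Real.dist_eq, NNReal.coe_one, one_mul, dist_eq_norm]
  refine abs_kthLargest_sub_le hK1 hKL u w fun i => ?_
  have h := abs_apply_le_norm (u - w) i
  simpa [PiLp.sub_apply] using h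

lemma integrable_kth {L k : ℕ} (hk1 : 1 ≤ k) (hkL : k ≤ L) (s : EuclideanSpace ℝ (Fin L))
    (ε : ℝ) :
    Integrable (fun z : EuclideanSpace ℝ (Fin L) => kthLargest k (s + ε • z))
      (stdGaussian L) := by
  have hcont : Continuous (fun z : EuclideanSpace ℝ (Fin L) => s + ε • z) :=
    continuous_const.add (continuous_id.const_smul ε)
  have hbound : ∀ z : EuclideanSpace ℝ (Fin L),
      ‖kthLargest k (s + ε • z)‖ ≤ |kthLargest k s| + |ε| * ‖z‖ := by
    intro z
    have h1 : |kthLargest k (s + ε • z) - kthLargest k s| ≤ |ε| * ‖z‖ :=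
      abs_kthLargest_sub_le hk1 hkL _ _ (coord_diff_bound s z ε)
    have h2 := abs_sub_abs_le_abs_sub (kthLargest k (s + ε • z)) (kthLargest k s)
    rw [Real.norm_eq_abs]
    linarith
  refine Integrable.mono' ((integrable_const |kthLargest k s|).add
    ((integrable_norm_stdGaussian L).const_mul |ε|))
    (((continuous_kthLargest hk1 hkL).comp hcont).aestronglyMeasurable)
    (Filter.Eventually.of_forall hbound)

lemma topSm_eq_integral {L K : ℕ} (hK1 : 1 ≤ K) (hKL : K ≤ L)
    (s : EuclideanSpace ℝ (Fin L)) (ε : ℝ) :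
    topSm K ε s = ∫ z, kthLargest K (s + ε • z) ∂(stdGaussian L) := by
  have hti : ∀ j, j ≤ L → Integrable
      (fun z : EuclideanSpace ℝ (Fin L) => topsum j (s + ε • z)) (stdGaussian L) := by
    intro j hj
    have heq : (fun z : EuclideanSpace ℝ (Fin L) => topsum j (s + ε • z))
        = fun z : EuclideanSpace ℝ (Fin L) => ∑ k ∈ Finset.range j, kthLargest (k + 1) (s + ε • z) := by
      funext z; exact topsum_eq_sum hj _
    rw [heq]
    exact integrable_finset_sum _ fun k hk =>
      integrable_kth (by omega) (by have := Finset.mem_range.1 hk; omega) s ε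
  rw [topSm, topsumSm, topsumSm, ← integral_sub (hti K hKL) (hti (K-1) (by omega))]
  congr 1; funext z
  exact topsum_sub hK1 hKL _

/-- `topSm K ε s → top_K s` as `ε → 0⁺`. -/
theorem topSm_tendsto_top (L K : ℕ) (hL : 1 ≤ L) (hK1 : 1 ≤ K) (hKL : K ≤ L)
    (s : EuclideanSpace ℝ (Fin L)) :
    Filter.Tendsto (fun ε : ℝ => topSm K ε s) (nhdsWithin 0 (Set.Ioi 0))
      (nhds (kthLargest K s)) := by
  set c := kthLargest K s with hc
  set M := ∫ z, ‖z‖ ∂(stdGaussian L) with hM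
  have hbound : ∀ ε : ℝ, |topSm K ε s - c| ≤ |ε| * M := by
    intro ε
    have hint := integrable_kth hK1 hKL s ε
    have h1 : topSm K ε s - c = ∫ z, (kthLargest K (s + ε • z) - c) ∂(stdGaussian L) := by
      rw [topSm_eq_integral hK1 hKL s ε, integral_sub hint (integrable_const c),
        integral_const]
      simp
    rw [h1]
    have h2 : |∫ z, (kthLargest K (s + ε • z) - c) ∂(stdGaussian L)|
        ≤ ∫ z, |kthLargest K (s + ε • z) - c| ∂(stdGaussian L) := by
      simpa [Real.norm_eq_abs] using
        norm_integral_le_integral_norm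
          (fun z : EuclideanSpace ℝ (Fin L) => kthLargest K (s + ε • z) - c)
          (μ := stdGaussian L)
    refine h2.trans ?_
    have h3 : ∫ z, |kthLargest K (s + ε • z) - c| ∂(stdGaussian L)
        ≤ ∫ z, |ε| * ‖z‖ ∂(stdGaussian L) := by
      refine integral_mono ((hint.sub (integrable_const c)).abs)
        ((integrable_norm_stdGaussian L).const_mul |ε|) fun z => ?_
      exact abs_kthLargest_sub_le hK1 hKL _ _ (coord_diff_bound s z ε)
    refine h3.trans_eq ?_
    rw [integral_const_mul]
  have htend0 : Filter.Tendsto (fun ε : ℝ => |ε| * M) (nhdsWithin 0 (Set.Ioi 0)) (nhds 0) := by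
    have h : Filter.Tendsto (fun ε : ℝ => |ε| * M) (nhds 0) (nhds (|(0 : ℝ)| * M)) :=
      (continuous_abs.mul continuous_const).tendsto 0
    simpa using h.mono_left nhdsWithin_le_nhds
  rw [tendsto_iff_dist_tendsto_zero]
  refine squeeze_zero (fun ε => dist_nonneg) (fun ε => ?_) htend0
  rw [Real.dist_eq]
  exact hbound ε
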